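/- Let m ≥ 1 be an integer and θ ∈ ℝ. Let X ∼ Bin(m, 1/2), i.e., P(X = x) = 2^{−m}·binom(m, x) for x = 0, …, m. Then the covariance of X with the indicator 1{X > θ} satisfies Σ_{x=0}^{m} 2^{−m}·binom(m, x)·(x − m/2)·1{x > θ} = (m/4)·2^{−(m−1)}·binom(m−1, ⌊θ⌋), where binom(a, b) := 0 whenever b < 0 or b > a (in particular the right-hand side is 0 when ⌊θ⌋ < 0 or ⌊θ⌋ > m−1). -/
import Mathlib

/-- Binomial coefficient with an integer lower index, with the convention that it
vanishes for negative lower index (and, via `Nat.choose`, above the upper index). -/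
def ibinom (a : ℕ) (b : ℤ) : ℕ := if 0 ≤ b then a.choose b.toNat else 0

lemma step_id (m : ℕ) (x : ℕ) :
    (m.choose x : ℝ) * (2 * x - m) =
      (m : ℝ) * (ibinom (m - 1) ((x : ℤ) - 1) : ℝ) - (m : ℝ) * (ibinom (m - 1) (x : ℤ) : ℝ) := by
  rcases Nat.eq_zero_or_pos m with hm | hm
  · subst hm; cases x <;> simp [ibinom]
  obtain ⟨n, rfl⟩ : ∃ n, m = n + 1 := ⟨m - 1, by omega⟩
  cases x with
  | zero => simp [ibinom]
  | succ j =>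
    have h1 : (n + 1) * n.choose j = (n + 1).choose (j + 1) * (j + 1) :=
      Nat.add_one_mul_choose_eq n j
    have h2 : (n + 1).choose (j + 1) = n.choose j + n.choose (j + 1) :=
      Nat.choose_succ_succ n j
    have hib1 : ibinom ((n+1) - 1) ((↑(j+1) : ℤ) - 1) = n.choose j := by
      simp [ibinom]
    have hib2 : ibinom ((n+1) - 1) (↑(j+1) : ℤ) = n.choose (j + 1) := by
      simp [ibinom]
      exact fun h => absurd h (by omega)
    rw [hib1, hib2]
    have h1' : ((n:ℝ) + 1) * n.choose j = ((n + 1).choose (j + 1) : ℝ) * ((j:ℝ) + 1) := by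
      exact_mod_cast h1
    have h2' : ((n + 1).choose (j + 1) : ℝ) = (n.choose j : ℝ) + (n.choose (j + 1) : ℝ) := by
      exact_mod_cast h2
    push_cast
    nlinarith [h1', h2']

lemma key_sum (m : ℕ) (hm : 1 ≤ m) (k : ℤ) :
    ∑ x ∈ Finset.range (m + 1),
        (m.choose x : ℝ) * (2 * x - m) * (if k < (x : ℤ) then (1 : ℝ) else 0)
      = (m : ℝ) * (ibinom (m - 1) k : ℝ) := by
  set F : ℕ → ℝ := fun x => (m : ℝ) * (ibinom (m - 1) ((x : ℤ) - 1) : ℝ) with hF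
  set a := (k + 1).toNat with ha
  have hfil : (Finset.range (m + 1)).filter (fun x : ℕ => k < (x : ℤ)) = Finset.Ico a (m + 1) := by
    ext x
    simp only [Finset.mem_filter, Finset.mem_range, Finset.mem_Ico, ha]
    omega
  have h1 : ∑ x ∈ Finset.range (m + 1),
        (m.choose x : ℝ) * (2 * x - m) * (if k < (x : ℤ) then (1 : ℝ) else 0)
      = ∑ x ∈ Finset.Ico a (m + 1), (m.choose x : ℝ) * (2 * x - m) := by
    rw [← hfil, Finset.sum_filter]
    exact Finset.sum_congr rfl (fun x _ => by split <;> ring)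
  rw [h1]
  have h2 : ∑ x ∈ Finset.Ico a (m + 1), (m.choose x : ℝ) * (2 * x - m)
      = ∑ x ∈ Finset.Ico a (m + 1), (F x - F (x + 1)) := by
    refine Finset.sum_congr rfl (fun x _ => ?_)
    have hx : ((x + 1 : ℕ) : ℤ) - 1 = (x : ℤ) := by push_cast; ring
    simp only [hF, hx]
    exact step_id m x
  rw [h2]
  by_cases hle : a ≤ m + 1
  · rw [Finset.sum_Ico_eq_sum_range]
    have h3 : ∑ i ∈ Finset.range (m + 1 - a), (F (a + i) - F (a + (i + 1)))
        = F (a + 0) - F (a + (m + 1 - a)) :=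
      Finset.sum_range_sub' (fun i => F (a + i)) (m + 1 - a)
    simp only [show ∀ i, a + (i + 1) = a + i + 1 from fun i => by omega] at h3 ⊢
    rw [h3]
    have hFm : F (a + (m + 1 - a)) = 0 := by
      have hma : a + (m + 1 - a) = m + 1 := by omega
      rw [hma]
      simp only [hF]
      have hib : ibinom (m - 1) ((↑(m + 1) : ℤ) - 1) = (m - 1).choose m := by
        rw [ibinom, if_pos (by omega)]
        congr 1
        omega
      rw [hib, Nat.choose_eq_zero_of_lt (by omega)]
      simp
    rw [hFm, sub_zero, hF]
    have hib2 : ibinom (m - 1) ((↑(a + 0) : ℤ) - 1) = ibinom (m - 1) k := by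
      rcases le_or_gt 0 k with hk | hk
      · congr 1
        omega
      · have h0 : a = 0 := by omega
        rw [h0]
        rw [ibinom, if_neg (by norm_num), ibinom, if_neg (by omega)]
    simp only [hib2]
  · have hico : Finset.Ico a (m + 1) = ∅ := by
      rw [Finset.Ico_eq_empty_iff]
      omega
    rw [hico, Finset.sum_empty]
    have : ibinom (m - 1) k = 0 := by
      rw [ibinom, if_pos (by omega)]
      exact Nat.choose_eq_zero_of_lt (by omega)
    rw [this]
    simp

/-- For `X ∼ Bin(m, 1/2)` and any threshold `θ ∈ ℝ`,
`Cov(X, 1{X > θ}) = (m/4) · 2^{-(m-1)} · binom(m-1, ⌊θ⌋)`,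
where the binomial coefficient is `0` if `⌊θ⌋ < 0` or `⌊θ⌋ > m - 1`. -/
theorem cov_binomial_indicator (m : ℕ) (hm : 1 ≤ m) (θ : ℝ) :
    ∑ x ∈ Finset.range (m + 1),
        (2 : ℝ)⁻¹ ^ m * (m.choose x : ℝ) * ((x : ℝ) - m / 2) *
          (if θ < (x : ℝ) then (1 : ℝ) else 0)
      = ((m : ℝ) / 4) * (2 : ℝ)⁻¹ ^ (m - 1) * (ibinom (m - 1) ⌊θ⌋ : ℝ) := by
  have hind : ∀ x : ℕ, (if θ < (x : ℝ) then (1 : ℝ) else 0)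
      = (if ⌊θ⌋ < (x : ℤ) then (1 : ℝ) else 0) := by
    intro x
    have : θ < (x : ℝ) ↔ ⌊θ⌋ < (x : ℤ) := by
      rw [Int.floor_lt]
      norm_cast
    simp [this]
  have h1 : ∑ x ∈ Finset.range (m + 1),
        (2 : ℝ)⁻¹ ^ m * (m.choose x : ℝ) * ((x : ℝ) - m / 2) *
          (if θ < (x : ℝ) then (1 : ℝ) else 0)
      = ((2 : ℝ)⁻¹ ^ m / 2) * ∑ x ∈ Finset.range (m + 1),
          (m.choose x : ℝ) * (2 * x - m) * (if ⌊θ⌋ < (x : ℤ) then (1 : ℝ) else 0) := by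
    rw [Finset.mul_sum]
    refine Finset.sum_congr rfl (fun x _ => ?_)
    rw [hind x]
    ring
  rw [h1, key_sum m hm ⌊θ⌋]
  obtain ⟨n, rfl⟩ : ∃ n, m = n + 1 := ⟨m - 1, by omega⟩
  simp only [Nat.add_sub_cancel]
  rw [pow_succ]
  ring
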